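/- With the notation of the polar fixed-point equations for primary resonance, eliminating φ via sin²φ + cos²φ = 1 yields the quadratic equation a Ω² + b Ω + c = 0 in Ω with a = ρ², b = −2 f₁^I ρ² − f₂^I ρ⁴/2, and c = |f₁|² ρ² + (f₁^I f₂^I + f₁^R f₂^R) ρ⁴/2 + |f₂|² ρ⁶/16 − 4 (f₃^R)² (1+α²). -/
import Mathlib


/-- Eliminating the phase via `sin²φ + cos²φ = 1` from the expressions for `sin φ` and
`cos φ` yields the quadratic `a Ω² + b Ω + c = 0` with
`a = ρ²`, `b = -2f₁ᴵρ² - f₂ᴵρ⁴/2`,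
`c = |f₁|²ρ² + (f₁ᴵf₂ᴵ + f₁ᴿf₂ᴿ)ρ⁴/2 + |f₂|²ρ⁶/16 - 4(f₃ᴿ)²(1+α²)`. -/
theorem primary_resonance_quadratic (f1R f1I f2R f2I f3R f3I ρ φ Ω : ℝ) (h3 : f3R ≠ 0)
    (hs : Real.sin φ = ((f1I - (f3I / f3R) * f1R - Ω) * ρ + (f2I - (f3I / f3R) * f2R) * ρ ^ 3 / 4) /
        (2 * f3R * (1 + (f3I / f3R) ^ 2)))
    (hc : Real.cos φ = -(((f1R + (f3I / f3R) * f1I - (f3I / f3R) * Ω) * ρ +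
        (f2R + (f3I / f3R) * f2I) * ρ ^ 3 / 4) / (2 * f3R * (1 + (f3I / f3R) ^ 2)))) :
    ρ ^ 2 * Ω ^ 2 + (-2 * f1I * ρ ^ 2 - f2I * ρ ^ 4 / 2) * Ω +
      ((f1R ^ 2 + f1I ^ 2) * ρ ^ 2 + (f1I * f2I + f1R * f2R) * ρ ^ 4 / 2 +
        (f2R ^ 2 + f2I ^ 2) * ρ ^ 6 / 16 - 4 * f3R ^ 2 * (1 + (f3I / f3R) ^ 2)) = 0 := by
  set a := f3I / f3R with ha
  have hD : 2 * f3R * (1 + a ^ 2) ≠ 0 := by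
    apply mul_ne_zero (mul_ne_zero two_ne_zero h3); positivity
  have h := Real.sin_sq_add_cos_sq φ
  rw [hs, hc] at h
  field_simp at h
  have h16 : (16 : ℝ) * (1 + a ^ 2) ≠ 0 := by positivity
  have key : (ρ ^ 2 * Ω ^ 2 + (-2 * f1I * ρ ^ 2 - f2I * ρ ^ 4 / 2) * Ω +
      ((f1R ^ 2 + f1I ^ 2) * ρ ^ 2 + (f1I * f2I + f1R * f2R) * ρ ^ 4 / 2 +
        (f2R ^ 2 + f2I ^ 2) * ρ ^ 6 / 16 - 4 * f3R ^ 2 * (1 + a ^ 2))) * (16 * (1 + a ^ 2)) = 0 := by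
    linear_combination h
  exact (mul_eq_zero.mp key).resolve_right h16
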